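/- Let f_{tT}(y;z) be the stable-1/2 bridge density as above, for a bridge from 0 to z > 0 over [0,T] with activity parameter c > 0. Then the incomplete first moment satisfies, for 0 ≤ y ≤ z: ∫₀^y u f_{tT}(u;z) du = (t/T) z { Φ(c(Ty−tz)/√(yz(z−y))) − e^{2c²t(T−t)/z} Φ(c((2t−T)y−tz)/√(yz(z−y))) }. -/

import Mathlib

open MeasureTheory Real Set

/-- Standard normal cumulative distribution function. -/
noncomputable def Phi (x : ℝ) : ℝ :=
  (Real.sqrt (2 * Real.pi))⁻¹ * ∫ u in Set.Iic x, Real.exp (-(u ^ 2) / 2)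

/-- Marginal density at time `t` of the stable-1/2 bridge from `0` at time `0` to `z` at
time `T`, with activity parameter `c`. -/
noncomputable def stableBridgeDen (c T t z y : ℝ) : ℝ :=
  (1 / Real.sqrt (2 * Real.pi)) * (c * t * (T - t) / T) *
    (Real.exp (-(c ^ 2 * (T * y - t * z) ^ 2) / (2 * y * z * (z - y))) /
      (y - y ^ 2 / z) ^ ((3 : ℝ) / 2))

open Filter Topology

lemma gauss_integrable : Integrable (fun u : ℝ => Real.exp (-(u ^ 2) / 2)) := by
  have h := integrable_exp_neg_mul_sq (by norm_num : (0:ℝ) < 1/2)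
  exact h.congr (Filter.Eventually.of_forall fun u => by ring_nf)

lemma hasDerivAt_Phi (x : ℝ) :
    HasDerivAt Phi ((Real.sqrt (2 * Real.pi))⁻¹ * Real.exp (-(x ^ 2) / 2)) x := by
  have hfi := gauss_integrable
  have key : ∀ v : ℝ, Phi v = (Real.sqrt (2 * Real.pi))⁻¹ *
      ((∫ u in Set.Iic (0:ℝ), Real.exp (-(u ^ 2) / 2)) +
        ∫ u in (0:ℝ)..v, Real.exp (-(u ^ 2) / 2)) := by
    intro v
    unfold Phi
    rw [← intervalIntegral.integral_Iic_sub_Iic hfi.integrableOn hfi.integrableOn]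
    ring
  have hd : HasDerivAt (fun v => ∫ u in (0:ℝ)..v, Real.exp (-(u ^ 2) / 2))
      (Real.exp (-(x ^ 2) / 2)) x := by
    refine intervalIntegral.integral_hasDerivAt_right hfi.intervalIntegrable ?_ ?_
    · exact hfi.aestronglyMeasurable.stronglyMeasurableAtFilter
    · exact (by continuity : Continuous fun u : ℝ => Real.exp (-(u ^ 2) / 2)).continuousAt
  have := ((hd.const_add (∫ u in Set.Iic (0:ℝ), Real.exp (-(u ^ 2) / 2))).const_mul
    (Real.sqrt (2 * Real.pi))⁻¹)
  exact this.congr_of_eventuallyEq (by filter_upwards with v; rw [key v])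

lemma tendsto_gauss_Iic_atBot :
    Tendsto (fun x : ℝ => ∫ u in Set.Iic x, Real.exp (-(u ^ 2) / 2)) atBot (𝓝 0) := by
  have hfi := gauss_integrable
  have h0 : (0:ℝ) = ∫ u : ℝ, (0:ℝ) := by simp
  rw [h0]
  have : ∀ x : ℝ, (∫ u in Set.Iic x, Real.exp (-(u ^ 2) / 2))
      = ∫ u : ℝ, (Set.Iic x).indicator (fun u => Real.exp (-(u ^ 2) / 2)) u := by
    intro x; rw [integral_indicator measurableSet_Iic]
  simp only [this]
  refine tendsto_integral_filter_of_dominated_convergence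
    (fun u => Real.exp (-(u ^ 2) / 2)) ?_ ?_ hfi ?_
  · filter_upwards with x
    exact hfi.aestronglyMeasurable.indicator measurableSet_Iic
  · filter_upwards with x
    filter_upwards with u
    rw [Real.norm_eq_abs, abs_of_nonneg (Set.indicator_nonneg (fun _ _ => (Real.exp_pos _).le) _)]
    by_cases h : u ∈ Set.Iic x
    · rw [Set.indicator_of_mem h]
    · rw [Set.indicator_of_notMem h]; exact (Real.exp_pos _).le
  · filter_upwards with u
    have : ∀ᶠ x in atBot, (Set.Iic x).indicator
        (fun u => Real.exp (-(u ^ 2) / 2)) u = 0 := by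
      filter_upwards [eventually_lt_atBot u] with x hx
      exact Set.indicator_of_notMem (by simpa using hx) _
    exact Tendsto.congr' (this.mono fun x hx => hx.symm) tendsto_const_nhds

lemma Phi_tendsto_atBot : Tendsto Phi atBot (𝓝 0) := by
  have h := tendsto_gauss_Iic_atBot.const_mul (Real.sqrt (2 * Real.pi))⁻¹
  rw [mul_zero] at h
  exact h.congr fun x => by rw [Phi, mul_comm]

lemma rpow32 {a : ℝ} (ha : 0 ≤ a) : a ^ ((3:ℝ)/2) = Real.sqrt a ^ 3 := by
  rw [show (3:ℝ)/2 = (1/2)*3 by norm_num, Real.rpow_mul ha, Real.sqrt_eq_rpow,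
    ← Real.rpow_natCast (a ^ ((1:ℝ)/2)) 3]
  norm_num

lemma hasDerivAt_g (c T t z : ℝ) (hc : 0 < c) (ht : 0 < t) (htT : t < T) (hz : 0 < z)
    (u : ℝ) (hu : u ∈ Set.Ioo 0 z) :
    HasDerivAt (fun v => (t / T) * z *
          (Phi (c * (T * v - t * z) / Real.sqrt (v * z * (z - v)))
            - Real.exp (2 * c ^ 2 * t * (T - t) / z) *
                Phi (c * ((2 * t - T) * v - t * z) / Real.sqrt (v * z * (z - v)))))
      (u * stableBridgeDen c T t z u) u := by
  obtain ⟨hu0, huz⟩ := hu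
  have hT : 0 < T := ht.trans htT
  have hzu : 0 < z - u := by linarith
  have hq : 0 < u * z * (z - u) := by positivity
  set S : ℝ := Real.sqrt (u * z * (z - u)) with hSdef
  have hS : 0 < S := Real.sqrt_pos.mpr hq
  have hS2 : S ^ 2 = u * z * (z - u) := Real.sq_sqrt hq.le
  -- derivative of the inside of the sqrt
  have hqd : HasDerivAt (fun v : ℝ => v * z * (z - v)) (z * (z - u) + u * z * (-1)) u := by
    have h1 : HasDerivAt (fun v : ℝ => v * z) z u := by
      simpa using (hasDerivAt_id u).mul_const z
    have h2 : HasDerivAt (fun v : ℝ => z - v) (-1) u := by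
      simpa using (hasDerivAt_id u).const_sub z
    exact h1.mul h2
  have hSd : HasDerivAt (fun v : ℝ => Real.sqrt (v * z * (z - v)))
      ((z * (z - u) + u * z * (-1)) / (2 * S)) u := hqd.sqrt hq.ne'
  -- numerators
  have hAnum : HasDerivAt (fun v : ℝ => c * (T * v - t * z)) (c * T) u := by
    simpa using (((hasDerivAt_id u).const_mul T).sub_const (t * z)).const_mul c
  have hBnum : HasDerivAt (fun v : ℝ => c * ((2 * t - T) * v - t * z)) (c * (2 * t - T)) u := by
    simpa using (((hasDerivAt_id u).const_mul (2 * t - T)).sub_const (t * z)).const_mul c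
  have hA : HasDerivAt (fun v => c * (T * v - t * z) / Real.sqrt (v * z * (z - v)))
      ((c * T * S - c * (T * u - t * z) * ((z * (z - u) + u * z * (-1)) / (2 * S))) / S ^ 2)
      u := hAnum.div hSd hS.ne'
  have hB : HasDerivAt (fun v => c * ((2 * t - T) * v - t * z) / Real.sqrt (v * z * (z - v)))
      ((c * (2 * t - T) * S - c * ((2 * t - T) * u - t * z) *
        ((z * (z - u) + u * z * (-1)) / (2 * S))) / S ^ 2) u := hBnum.div hSd hS.ne'
  have hPA := (hasDerivAt_Phi (c * (T * u - t * z) / S)).comp u hA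
  have hPB := (hasDerivAt_Phi (c * ((2 * t - T) * u - t * z) / S)).comp u hB
  have hg := ((hPA.sub (hPB.const_mul (Real.exp (2 * c ^ 2 * t * (T - t) / z)))).const_mul
    ((t / T) * z))
  convert hg using 1
  · rfl
  · rfl
  · rfl
  -- now the value identity
  set A'v := (c * T * S - c * (T * u - t * z) * ((z * (z - u) + u * z * (-1)) / (2 * S))) / S ^ 2 with hA'v
  set B'v := (c * (2 * t - T) * S - c * ((2 * t - T) * u - t * z) *
        ((z * (z - u) + u * z * (-1)) / (2 * S))) / S ^ 2 with hB'v
  have hEB : Real.exp (2 * c ^ 2 * t * (T - t) / z) *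
      Real.exp (-(c * ((2 * t - T) * u - t * z) / S) ^ 2 / 2)
      = Real.exp (-(c * (T * u - t * z) / S) ^ 2 / 2) := by
    rw [← Real.exp_add]
    congr 1
    rw [div_pow, div_pow, hS2]
    field_simp
    ring
  have hAB : A'v - B'v = c * (T - t) * u * z ^ 2 / S ^ 3 := by
    rw [show (S:ℝ) ^ 3 = (u * z * (z - u)) * S by rw [pow_succ, hS2]]
    rw [hA'v, hB'v]
    field_simp [hS.ne']
    linear_combination ((4 * c * (T - t) * (u * z * (z - u)) - 2 * c * (T - t) * u * z ^ 2) * S + 2 * (T - t) * (z - 2 * u) + 2 * c * (T - t) * z * u * (2 * u - z) * S) * hS2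
  have hrp : (u - u ^ 2 / z) ^ ((3:ℝ)/2) = S ^ 3 / z ^ 3 := by
    rw [show u - u ^ 2 / z = (u * z * (z - u)) / z ^ 2 by field_simp,
      Real.div_rpow hq.le (sq_nonneg z), rpow32 hq.le, rpow32 (sq_nonneg z),
      Real.sqrt_sq hz.le]
  have hexpA : Real.exp (-(c ^ 2 * (T * u - t * z) ^ 2) / (2 * u * z * (z - u)))
      = Real.exp (-(c * (T * u - t * z) / S) ^ 2 / 2) := by
    congr 1
    rw [div_pow, hS2]
    field_simp
  rw [stableBridgeDen, hrp, hexpA]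
  rw [show Real.exp (2 * c ^ 2 * t * (T - t) / z) *
      ((Real.sqrt (2 * Real.pi))⁻¹ *
        Real.exp (-(c * ((2 * t - T) * u - t * z) / S) ^ 2 / 2) * B'v)
      = (Real.sqrt (2 * Real.pi))⁻¹ *
        (Real.exp (2 * c ^ 2 * t * (T - t) / z) *
          Real.exp (-(c * ((2 * t - T) * u - t * z) / S) ^ 2 / 2)) * B'v by ring, hEB]
  have hS3 : (0:ℝ) < S ^ 3 := by positivity
  have hpi : Real.sqrt (2 * Real.pi) ≠ 0 := by positivity
  rw [show (t / T) * z * ((Real.sqrt (2 * Real.pi))⁻¹ *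
        Real.exp (-(c * (T * u - t * z) / S) ^ 2 / 2) * A'v -
      (Real.sqrt (2 * Real.pi))⁻¹ *
        Real.exp (-(c * (T * u - t * z) / S) ^ 2 / 2) * B'v)
      = (t / T) * z * (Real.sqrt (2 * Real.pi))⁻¹ *
        Real.exp (-(c * (T * u - t * z) / S) ^ 2 / 2) * (A'v - B'v) by ring, hAB]
  field_simp

set_option maxHeartbeats 1000000 in
lemma den_bound (c T t z : ℝ) (hc : 0 < c) (ht : 0 < t) (htT : t < T) (hz : 0 < z)
    (y : ℝ) (hy : y ∈ Set.Ioo 0 z) (u : ℝ)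
    (hu0 : 0 < u) (huy : u ≤ y) (huT : u ≤ t * z / (2 * T)) :
    u * stableBridgeDen c T t z u ≤
      (1 / Real.sqrt (2 * Real.pi)) * (c * t * (T - t) / T) * z ^ 3 *
        (2 * 4 / (c ^ 2 * (t * z) ^ 2)) * (Real.sqrt y / Real.sqrt (z * (z - y))) := by
  obtain ⟨hy0, hyz⟩ := hy
  have hT : 0 < T := ht.trans htT
  have huz : u < z := lt_of_le_of_lt huy hyz
  have hzu : 0 < z - u := by linarith
  have hq : 0 < u * z * (z - u) := by positivity
  set S : ℝ := Real.sqrt (u * z * (z - u)) with hSdef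
  have hS : 0 < S := Real.sqrt_pos.mpr hq
  have hS2 : S ^ 2 = u * z * (z - u) := Real.sq_sqrt hq.le
  have hrp : (u - u ^ 2 / z) ^ ((3:ℝ)/2) = S ^ 3 / z ^ 3 := by
    rw [show u - u ^ 2 / z = (u * z * (z - u)) / z ^ 2 by field_simp,
      Real.div_rpow hq.le (sq_nonneg z), rpow32 hq.le, rpow32 (sq_nonneg z),
      Real.sqrt_sq hz.le]
  have hCC : (0:ℝ) < 1 / Real.sqrt (2 * Real.pi) := by positivity
  have hD : (0:ℝ) < c * t * (T - t) / T := by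
    have : 0 < T - t := by linarith
    positivity
  -- bound on exp
  have hTu : T * u - t * z ≤ -(t * z / 2) := by
    have : T * u ≤ t * z / 2 := by
      calc T * u ≤ T * (t * z / (2 * T)) := by nlinarith
        _ = t * z / 2 := by field_simp
    linarith
  have htz : 0 < t * z := mul_pos ht hz
  have hTuneg : T * u - t * z < 0 := by linarith
  have hTu2 : (t * z / 2) ^ 2 ≤ (T * u - t * z) ^ 2 := by
    have h := mul_self_le_mul_self (by positivity : (0:ℝ) ≤ t * z / 2)
      (by linarith : t * z / 2 ≤ -(T * u - t * z))
    nlinarith [h]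
  have hexp : Real.exp (-(c ^ 2 * (T * u - t * z) ^ 2) / (2 * u * z * (z - u)))
      ≤ 2 * u * z * (z - u) * 4 / (c ^ 2 * (t * z) ^ 2) := by
    set x0 := c ^ 2 * (T * u - t * z) ^ 2 / (2 * u * z * (z - u)) with hx0
    have h0sq : 0 < (T * u - t * z) ^ 2 := by nlinarith [hTuneg]
    have hx0pos : 0 < x0 := by
      rw [hx0]
      have h2 : 0 < 2 * u * z * (z - u) := by positivity
      positivity
    have h1 : Real.exp (-(c ^ 2 * (T * u - t * z) ^ 2) / (2 * u * z * (z - u))) = Real.exp (-x0) := by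
      rw [hx0]; congr 1; ring
    rw [h1, Real.exp_neg]
    have h2 : (Real.exp x0)⁻¹ ≤ x0⁻¹ := by
      apply inv_anti₀ hx0pos
      linarith [Real.add_one_le_exp x0]
    refine h2.trans ?_
    rw [hx0, inv_div]
    have hden1 : 0 < c ^ 2 * (T * u - t * z) ^ 2 := mul_pos (pow_pos hc 2) h0sq
    rw [div_le_div_iff₀ hden1 (by positivity)]
    have hkey := mul_le_mul_of_nonneg_left hTu2 (by positivity : (0:ℝ) ≤ 4 * c ^ 2)
    nlinarith [mul_le_mul_of_nonneg_left hkey (le_of_lt (show (0:ℝ) < 2 * u * z * (z - u) by positivity))]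
  -- main chain
  have hfu : u * stableBridgeDen c T t z u =
      (1 / Real.sqrt (2 * Real.pi)) * (c * t * (T - t) / T) * z ^ 3 *
        (u * Real.exp (-(c ^ 2 * (T * u - t * z) ^ 2) / (2 * u * z * (z - u))) / S ^ 3) := by
    rw [stableBridgeDen, hrp]
    field_simp
  rw [hfu]
  have hstep : u * Real.exp (-(c ^ 2 * (T * u - t * z) ^ 2) / (2 * u * z * (z - u))) / S ^ 3
      ≤ (2 * 4 / (c ^ 2 * (t * z) ^ 2)) * (Real.sqrt y / Real.sqrt (z * (z - y))) := by
    calc u * Real.exp (-(c ^ 2 * (T * u - t * z) ^ 2) / (2 * u * z * (z - u))) / S ^ 3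
        ≤ u * (2 * u * z * (z - u) * 4 / (c ^ 2 * (t * z) ^ 2)) / S ^ 3 := by
          gcongr
      _ = (2 * 4 / (c ^ 2 * (t * z) ^ 2)) * (u * S ^ 2 / S ^ 3) := by
          rw [hS2]; ring
      _ = (2 * 4 / (c ^ 2 * (t * z) ^ 2)) * (u / S) := by
          congr 1
          rw [show (S:ℝ) ^ 3 = S ^ 2 * S by ring]
          field_simp
      _ ≤ (2 * 4 / (c ^ 2 * (t * z) ^ 2)) * (Real.sqrt y / Real.sqrt (z * (z - y))) := by
          have hus : u / S = Real.sqrt u / Real.sqrt (z * (z - u)) := by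
            rw [hSdef, show u * z * (z - u) = u * (z * (z - u)) by ring,
              Real.sqrt_mul hu0.le, div_mul_eq_div_div, Real.div_sqrt]
          rw [hus]
          have hc24 : (0:ℝ) ≤ 2 * 4 / (c ^ 2 * (t * z) ^ 2) := by positivity
          refine mul_le_mul_of_nonneg_left ?_ hc24
          refine div_le_div₀ (Real.sqrt_nonneg y) (Real.sqrt_le_sqrt huy)
            (Real.sqrt_pos.mpr (by nlinarith)) (Real.sqrt_le_sqrt (by nlinarith))
  calc (1 / Real.sqrt (2 * Real.pi)) * (c * t * (T - t) / T) * z ^ 3 *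
        (u * Real.exp (-(c ^ 2 * (T * u - t * z) ^ 2) / (2 * u * z * (z - u))) / S ^ 3)
      ≤ (1 / Real.sqrt (2 * Real.pi)) * (c * t * (T - t) / T) * z ^ 3 *
        ((2 * 4 / (c ^ 2 * (t * z) ^ 2)) * (Real.sqrt y / Real.sqrt (z * (z - y)))) := by
        have : (0:ℝ) < z ^ 3 := by positivity
        exact mul_le_mul_of_nonneg_left hstep (by positivity)
    _ = (1 / Real.sqrt (2 * Real.pi)) * (c * t * (T - t) / T) * z ^ 3 *
        (2 * 4 / (c ^ 2 * (t * z) ^ 2)) * (Real.sqrt y / Real.sqrt (z * (z - y))) := by ring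

lemma den_measurable (c T t z : ℝ) :
    Measurable (fun u => u * stableBridgeDen c T t z u) := by
  unfold stableBridgeDen
  refine measurable_id.mul (measurable_const.mul ?_)
  refine Measurable.div ?_ ?_
  · exact (Measurable.div (by fun_prop) (by fun_prop)).exp
  · have hcont : Continuous (fun u : ℝ => (u - u ^ 2 / z) ^ ((3:ℝ)/2)) :=
      continuous_iff_continuousAt.mpr fun x =>
        (Real.continuousAt_rpow_const _ _ (Or.inr (by norm_num))).comp
          ((continuous_id.sub ((continuous_pow 2).div_const z)).continuousAt)
    exact hcont.measurable

lemma den_continuousAt (c T t z : ℝ) (hz : 0 < z) (u : ℝ) (hu : u ∈ Set.Ioo 0 z) :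
    ContinuousAt (fun u => u * stableBridgeDen c T t z u) u := by
  obtain ⟨hu0, huz⟩ := hu
  have hzu : (0:ℝ) < z - u := by linarith
  have hbase : (0:ℝ) < u - u ^ 2 / z := by
    rw [show u - u ^ 2 / z = u * (z - u) / z by field_simp]
    positivity
  have hden : (0:ℝ) < 2 * u * z * (z - u) :=
    mul_pos (mul_pos (mul_pos two_pos hu0) hz) hzu
  unfold stableBridgeDen
  refine continuousAt_id.mul (continuousAt_const.mul ?_)
  refine ContinuousAt.div ?_ ?_ ?_
  · refine (Real.continuous_exp.continuousAt).comp
      (ContinuousAt.div (by fun_prop) (by fun_prop) hden.ne')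
  · exact ((Real.continuousAt_rpow_const _ _ (Or.inr (by norm_num)))).comp
      ((continuous_id.sub ((continuous_pow 2).div_const z)).continuousAt)
  · exact (Real.rpow_pos_of_pos hbase _).ne'

set_option maxHeartbeats 1600000 in
/-- Incomplete first moment of the stable-1/2 bridge marginal. -/
theorem stable_half_bridge_incomplete_first_moment (c T t z : ℝ)
    (hc : 0 < c) (ht : 0 < t) (htT : t < T) (hz : 0 < z)
    (y : ℝ) (hy : y ∈ Set.Ioo 0 z) :
    (∫ u in Set.Ioo (0 : ℝ) y, u * stableBridgeDen c T t z u)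
      = (t / T) * z *
          (Phi (c * (T * y - t * z) / Real.sqrt (y * z * (z - y)))
            - Real.exp (2 * c ^ 2 * t * (T - t) / z) *
                Phi (c * ((2 * t - T) * y - t * z) / Real.sqrt (y * z * (z - y)))) := by
  obtain ⟨hy0, hyz⟩ := hy
  have hT : 0 < T := ht.trans htT
  set f : ℝ → ℝ := fun u => u * stableBridgeDen c T t z u with hf
  set g : ℝ → ℝ := fun v => (t / T) * z *
          (Phi (c * (T * v - t * z) / Real.sqrt (v * z * (z - v)))
            - Real.exp (2 * c ^ 2 * t * (T - t) / z) *
                Phi (c * ((2 * t - T) * v - t * z) / Real.sqrt (v * z * (z - v)))) with hg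
  set M : ℝ := (1 / Real.sqrt (2 * Real.pi)) * (c * t * (T - t) / T) * z ^ 3 *
        (2 * 4 / (c ^ 2 * (t * z) ^ 2)) * (Real.sqrt y / Real.sqrt (z * (z - y))) with hM
  set ε₀ : ℝ := min y (t * z / (2 * T)) with hε₀
  have hε₀pos : 0 < ε₀ := lt_min hy0 (div_pos (mul_pos ht hz) (by linarith))
  have hε₀y : ε₀ ≤ y := min_le_left _ _
  -- pointwise bound on (0, ε₀]
  have hbd : ∀ u ∈ Set.Ioc (0:ℝ) ε₀, ‖f u‖ ≤ M := by
    intro u hu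
    have hb := den_bound c T t z hc ht htT hz y ⟨hy0, hyz⟩ u hu.1
      (hu.2.trans hε₀y) (hu.2.trans (min_le_right _ _))
    rw [Real.norm_eq_abs, abs_of_nonneg]
    · exact hb
    · have huz : u < z := lt_of_le_of_lt (hu.2.trans hε₀y) hyz
      have hu0 : 0 < u := hu.1
      have hbase : (0:ℝ) < u - u ^ 2 / z := by
        rw [show u - u ^ 2 / z = u * (z - u) / z by field_simp]
        have : 0 < z - u := by linarith
        positivity
      have hD : (0:ℝ) < c * t * (T - t) / T :=
        div_pos (mul_pos (mul_pos hc ht) (by linarith)) hT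
      have hrp := Real.rpow_pos_of_pos hbase ((3:ℝ)/2)
      have hCC : (0:ℝ) < 1 / Real.sqrt (2 * Real.pi) := by positivity
      rw [hf]
      simp only []
      rw [stableBridgeDen]
      refine mul_nonneg hu.1.le (mul_nonneg (mul_nonneg hCC.le hD.le) ?_)
      exact div_nonneg (Real.exp_pos _).le hrp.le
  -- integrability on (0, y)
  have hIntSmall : IntegrableOn f (Set.Ioc 0 ε₀) := by
    refine Measure.integrableOn_of_bounded (M := M) (by simp)
      ((den_measurable c T t z).aestronglyMeasurable) ?_
    exact (ae_restrict_iff' measurableSet_Ioc).mpr (Filter.Eventually.of_forall hbd)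
  have hIntBig : ∀ a ∈ Set.Ioo (0:ℝ) z, IntegrableOn f (Set.Icc a y) := by
    intro a ha
    refine ContinuousOn.integrableOn_compact isCompact_Icc ?_
    intro v hv
    have hv' : v ∈ Set.Ioo 0 z := ⟨lt_of_lt_of_le ha.1 hv.1, lt_of_le_of_lt hv.2 hyz⟩
    exact (den_continuousAt c T t z hz v hv').continuousWithinAt
  have hInt : IntegrableOn f (Set.Ioo 0 y) := by
    have hsub : Set.Ioo 0 y ⊆ Set.Ioc 0 ε₀ ∪ Set.Icc ε₀ y := by
      intro v hv
      by_cases h : v ≤ ε₀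
      · exact Or.inl ⟨hv.1, h⟩
      · exact Or.inr ⟨le_of_not_ge h, hv.2.le⟩
    exact (hIntSmall.union (hIntBig ε₀ ⟨hε₀pos, lt_of_le_of_lt hε₀y hyz⟩)).mono_set hsub
  -- FTC on [ε, y] and splitting, for ε ∈ (0, min ε₀ y)
  have hkey : ∀ ε ∈ Set.Ioo (0:ℝ) ε₀,
      (∫ u in Set.Ioo (0:ℝ) y, f u) = (∫ u in Set.Ioc (0:ℝ) ε, f u) + (g y - g ε) := by
    intro ε hε
    have hεy : ε < y := lt_of_lt_of_le hε.2 hε₀y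
    have hFTC : (∫ u in ε..y, f u) = g y - g ε := by
      refine intervalIntegral.integral_eq_sub_of_hasDerivAt ?_ ?_
      · intro u hu
        rw [Set.uIcc_of_le hεy.le] at hu
        exact hasDerivAt_g c T t z hc ht htT hz u
          ⟨lt_of_lt_of_le hε.1 hu.1, lt_of_le_of_lt hu.2 hyz⟩
      · rw [intervalIntegrable_iff_integrableOn_Ioc_of_le hεy.le]
        exact (hIntBig ε ⟨hε.1, lt_of_lt_of_le hε.2 (hε₀y.trans hyz.le)⟩).mono_set
          (fun v hv => ⟨hv.1.le, hv.2⟩)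
    have hsplit : (∫ u in Set.Ioo (0:ℝ) y, f u)
        = (∫ u in Set.Ioc (0:ℝ) ε, f u) + ∫ u in Set.Ioo ε y, f u := by
      have hdisj : Disjoint (Set.Ioc (0:ℝ) ε) (Set.Ioo ε y) :=
        Set.disjoint_left.mpr fun v hv hv' => absurd hv'.1 (not_lt.mpr hv.2)
      have hint1 : IntegrableOn f (Set.Ioc (0:ℝ) ε) :=
        hIntSmall.mono_set (fun v hv => ⟨hv.1, hv.2.trans hε.2.le⟩)
      have hint2 : IntegrableOn f (Set.Ioo ε y) :=
        hInt.mono_set (fun v hv => ⟨lt_trans hε.1 hv.1, hv.2⟩)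
      rw [← Set.Ioc_union_Ioo_eq_Ioo hε.1.le hεy,
        setIntegral_union hdisj measurableSet_Ioo hint1 hint2]
    rw [hsplit, ← hFTC, intervalIntegral.integral_of_le hεy.le]
    simp [MeasureTheory.integral_Ioc_eq_integral_Ioo]
  -- limits as ε → 0⁺
  have hl : Filter.NeBot (𝓝[>] (0:ℝ)) := nhdsGT_neBot 0
  have hev : ∀ᶠ ε in 𝓝[>] (0:ℝ), ε ∈ Set.Ioo (0:ℝ) ε₀ := Ioo_mem_nhdsGT hε₀pos
  -- the small integral tends to zero
  have hsmall0 : Tendsto (fun ε => ∫ u in Set.Ioc (0:ℝ) ε, f u) (𝓝[>] (0:ℝ)) (𝓝 0) := by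
    apply squeeze_zero_norm'
    · filter_upwards [hev] with ε hε
      have := norm_setIntegral_le_of_norm_le_const (μ := volume) (s := Set.Ioc (0:ℝ) ε)
        (f := f) (C := M) (by simp) (fun x hx => hbd x ⟨hx.1, hx.2.trans hε.2.le⟩)
      calc ‖∫ u in Set.Ioc (0:ℝ) ε, f u‖ ≤ M * (volume (Set.Ioc (0:ℝ) ε)).toReal := this
        _ = M * ε := by rw [Real.volume_Ioc]; rw [ENNReal.toReal_ofReal (by linarith [hε.1])]; ring_nf
    · have : Tendsto (fun ε : ℝ => M * ε) (𝓝 0) (𝓝 (M * 0)) :=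
        (continuous_const.mul continuous_id).tendsto 0
      simpa using this.mono_left nhdsWithin_le_nhds
  -- g ε → 0
  have hgz : Tendsto g (𝓝[>] (0:ℝ)) (𝓝 0) := by
    have hSt : Tendsto (fun ε : ℝ => Real.sqrt (ε * z * (z - ε))) (𝓝[>] (0:ℝ)) (𝓝[>] 0) := by
      rw [tendsto_nhdsWithin_iff]
      constructor
      · have hcont : Tendsto (fun ε : ℝ => Real.sqrt (ε * z * (z - ε))) (𝓝 0) (𝓝 (Real.sqrt (0 * z * (z - 0)))) := by
          exact (Real.continuous_sqrt.comp (by continuity)).tendsto 0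
        simpa using hcont.mono_left nhdsWithin_le_nhds
      · filter_upwards [Ioo_mem_nhdsGT (show (0:ℝ) < z by exact hz)] with ε hε
        have : 0 < ε * z * (z - ε) := by
          have h1 := hε.1; have h2 : 0 < z - ε := by linarith [hε.2]
          positivity
        exact Real.sqrt_pos.mpr this
    have hinv : Tendsto (fun ε : ℝ => (Real.sqrt (ε * z * (z - ε)))⁻¹) (𝓝[>] (0:ℝ)) atTop :=
      tendsto_inv_nhdsGT_zero.comp hSt
    have hA : Tendsto (fun ε : ℝ => c * (T * ε - t * z) / Real.sqrt (ε * z * (z - ε)))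
        (𝓝[>] (0:ℝ)) atBot := by
      simp only [div_eq_mul_inv]
      refine Filter.Tendsto.neg_mul_atTop (show c * (T * 0 - t * z) < 0 by
        have := mul_pos ht hz; nlinarith) ?_ hinv
      exact ((continuous_const.mul ((continuous_const.mul continuous_id).sub
        continuous_const)).tendsto 0).mono_left nhdsWithin_le_nhds
    have hB : Tendsto (fun ε : ℝ => c * ((2 * t - T) * ε - t * z) / Real.sqrt (ε * z * (z - ε)))
        (𝓝[>] (0:ℝ)) atBot := by
      simp only [div_eq_mul_inv]
      refine Filter.Tendsto.neg_mul_atTop (show c * ((2 * t - T) * 0 - t * z) < 0 by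
        have := mul_pos ht hz; nlinarith) ?_ hinv
      exact ((continuous_const.mul ((continuous_const.mul continuous_id).sub
        continuous_const)).tendsto 0).mono_left nhdsWithin_le_nhds
    have hPhiA := Phi_tendsto_atBot.comp hA
    have hPhiB := Phi_tendsto_atBot.comp hB
    have := ((hPhiA.sub (hPhiB.const_mul (Real.exp (2 * c ^ 2 * t * (T - t) / z)))).const_mul
      ((t / T) * z))
    simpa [hg, Function.comp] using this
  -- conclusion
  have hRHS : Tendsto (fun ε => (∫ u in Set.Ioc (0:ℝ) ε, f u) + (g y - g ε)) (𝓝[>] (0:ℝ))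
      (𝓝 (g y)) := by
    have h2 : Tendsto (fun ε => g y - g ε) (𝓝[>] (0:ℝ)) (𝓝 (g y - 0)) :=
      (tendsto_const_nhds (α := ℝ) (x := g y) (f := 𝓝[>] (0:ℝ))).sub hgz
    have := hsmall0.add h2
    simpa using this
  have hconst : Tendsto (fun _ : ℝ => ∫ u in Set.Ioo (0:ℝ) y, f u) (𝓝[>] (0:ℝ))
      (𝓝 (∫ u in Set.Ioo (0:ℝ) y, f u)) := tendsto_const_nhds
  have := tendsto_nhds_unique (hconst.congr' ?_) hRHS
  · exact this
  · filter_upwards [hev] with ε hε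
    exact hkey ε hε
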